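/- arXiv:1511.02304 — 2 statements merged into one kernel-verified Lean document; each statement's English description precedes it below -/
import Mathlib

section
/- There exists a constant C > 0 such that for every function f : ℝ → ℝ that is continuously differentiable on [0,1], the Gagliardo–Nirenberg inequality ‖f‖_{L⁴(0,1)} ≤ C·(‖f‖ + ‖f'‖)^{1/2}·‖f‖_{L¹(0,1)}^{1/2} holds, where ‖·‖ denotes the L² norm on (0,1) and ‖f‖_{L¹(0,1)} = ∫₀¹ |f(x)| dx (inequality (gnb) of the paper: ‖Ψ‖_{L⁴} ≲ ‖Ψ‖_{H¹}^{1/2}‖Ψ‖_{L¹}^{1/2}). -/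
open MeasureTheory Set

/-- L² norm on (0,1). -/
noncomputable def L2norm (f : ℝ → ℝ) : ℝ := Real.sqrt (∫ x in (0:ℝ)..1, f x ^ 2)

/-- L⁴ norm on (0,1). -/
noncomputable def L4norm (f : ℝ → ℝ) : ℝ := (∫ x in (0:ℝ)..1, f x ^ 4) ^ ((1:ℝ)/4)

/-- L¹ norm on (0,1). -/
noncomputable def L1norm (f : ℝ → ℝ) : ℝ := ∫ x in (0:ℝ)..1, |f x|

private lemma alg_core (A B Q M : ℝ) (hA0 : 0 ≤ A) (hB0 : 0 ≤ B) (hQ0 : 0 ≤ Q) (hM0 : 0 ≤ M)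
    (hAB : A ≤ M * B) (hK : ∀ ε > (0:ℝ), M ^ 2 ≤ A + (ε * A + Q / ε)) :
    M ^ 3 * B ≤ 16 * (Real.sqrt A + Real.sqrt Q) ^ 2 * B ^ 2 := by
  set sA := Real.sqrt A with hsAdef
  set D := Real.sqrt Q with hDdef
  have hsA0 : 0 ≤ sA := Real.sqrt_nonneg _
  have hD0 : 0 ≤ D := Real.sqrt_nonneg _
  have hsA2 : sA ^ 2 = A := Real.sq_sqrt hA0
  have hD2 : D ^ 2 = Q := Real.sq_sqrt hQ0
  set H := sA + D with hHdef
  have hH0 : 0 ≤ H := by positivity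
  have hMH : M ^ 2 ≤ 2 * H ^ 2 := by
    have := hK 1 one_pos
    simp only [one_mul, div_one] at this
    nlinarith [sq_nonneg (sA - D), sq_nonneg (sA + D)]
  rcases eq_or_lt_of_le hB0 with hB | hB
  · rw [← hB]; ring_nf; simp
  rcases eq_or_lt_of_le hM0 with hM | hM
  · rw [← hM]; ring_nf; positivity
  suffices h : M ^ 3 ≤ 16 * H ^ 2 * B by nlinarith [sq_nonneg H]
  rcases eq_or_lt_of_le hQ0 with hQ | hQ
  · -- Q = 0 : show M ≤ B
    have hMB : M ≤ B := by
      refine le_of_forall_pos_le_add fun δ hδ => ?_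
      have hε : (0:ℝ) < δ / B := by positivity
      have h1 := hK (δ / B) hε
      rw [← hQ, zero_div] at h1
      have h2 : M * M ≤ M * (B + δ) := by
        have hεB : δ / B * B = δ := div_mul_cancel₀ δ (ne_of_gt hB)
        nlinarith [mul_le_mul_of_nonneg_left hAB (le_of_lt hε)]
      exact le_of_mul_le_mul_left (by linarith) hM
    nlinarith [sq_nonneg H]
  · -- Q > 0
    have hDpos : 0 < D := Real.sqrt_pos.mpr hQ
    set s := Real.sqrt (M * B) with hsdef
    have hspos : 0 < s := Real.sqrt_pos.mpr (by positivity)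
    have hs2 : s ^ 2 = M * B := Real.sq_sqrt (by positivity)
    have hε : (0:ℝ) < D / s := by positivity
    have h1 := hK (D / s) hε
    have hεA : D / s * A ≤ D * s := by
      have : D / s * A ≤ D / s * (s ^ 2) := by
        apply mul_le_mul_of_nonneg_left _ (le_of_lt hε)
        rw [hs2]; exact hAB
      calc D / s * A ≤ D / s * s ^ 2 := this
        _ = D * s := by field_simp
    have hQε : Q / (D / s) = D * s := by
      rw [← hD2]; field_simp
    have hM2s : M ^ 2 ≤ s ^ 2 + 2 * (D * s) := by
      rw [hQε] at h1; linarith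
    rcases le_total D s with hc | hc
    · have hM3B : M ≤ 3 * B := by
        have h2 : M * M ≤ M * (3 * B) := by nlinarith
        exact le_of_mul_le_mul_left (by linarith) hM
      have e1 : M ^ 2 * M ≤ (2 * H ^ 2) * (3 * B) :=
        mul_le_mul hMH hM3B (le_of_lt hM) (by positivity)
      have e2 : (0:ℝ) ≤ H ^ 2 * B := by positivity
      nlinarith [e1, e2]
    · have hss : s * s ≤ D * s := mul_le_mul_of_nonneg_right hc (le_of_lt hspos)
      have hM2Ds : M ^ 2 ≤ 3 * (D * s) := by
        have : s ^ 2 = s * s := sq s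
        linarith [hM2s]
      have hM4 : (M ^ 2) ^ 2 ≤ (3 * (D * s)) ^ 2 :=
        pow_le_pow_left₀ (sq_nonneg M) hM2Ds 2
      have hM4' : M ^ 4 ≤ 9 * D ^ 2 * (M * B) := by
        have h9 : (3 * (D * s)) ^ 2 = 9 * D ^ 2 * s ^ 2 := by ring
        rw [h9, hs2] at hM4
        calc M ^ 4 = (M ^ 2) ^ 2 := by ring
          _ ≤ 9 * D ^ 2 * (M * B) := hM4
      have hM3 : M ^ 3 ≤ 9 * D ^ 2 * B := by
        have h2 : M ^ 3 * M ≤ 9 * D ^ 2 * B * M := by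
          calc M ^ 3 * M = M ^ 4 := by ring
            _ ≤ 9 * D ^ 2 * (M * B) := hM4'
            _ = 9 * D ^ 2 * B * M := by ring
        exact le_of_mul_le_mul_right h2 hM
      have hDH : D ^ 2 ≤ H ^ 2 := pow_le_pow_left₀ hD0 (le_add_of_nonneg_left hsA0) 2
      have e2 : (0:ℝ) ≤ H ^ 2 * B - D ^ 2 * B := by
        have := mul_le_mul_of_nonneg_right hDH (le_of_lt hB)
        linarith
      have e3 : (0:ℝ) ≤ H ^ 2 * B := by positivity
      linarith [hM3, e2, e3]

/-- Gagliardo–Nirenberg inequality (gnb): `‖Ψ‖_{L⁴} ≲ ‖Ψ‖_{H¹}^{1/2} ‖Ψ‖_{L¹}^{1/2}` on (0,1). -/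
theorem gagliardo_nirenberg_L4_b :
    ∃ C > (0:ℝ), ∀ f f' : ℝ → ℝ,
      (∀ x ∈ Set.Icc (0:ℝ) 1, HasDerivWithinAt f (f' x) (Set.Icc (0:ℝ) 1) x) →
      ContinuousOn f' (Set.Icc (0:ℝ) 1) →
      L4norm f ≤ C * (L2norm f + L2norm f') ^ ((1:ℝ)/2) * L1norm f ^ ((1:ℝ)/2) := by
  refine ⟨2, by norm_num, ?_⟩
  intro f f' hderiv hcont'
  simp only [L4norm, L2norm, L1norm]
  have hf : ContinuousOn f (Icc 0 1) := fun x hx => (hderiv x hx).continuousWithinAt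
  have hii : ∀ g : ℝ → ℝ, ContinuousOn g (Icc 0 1) → ∀ a b : ℝ, a ∈ Icc (0:ℝ) 1 → b ∈ Icc (0:ℝ) 1 →
      IntervalIntegrable g volume a b :=
    fun g hg a b ha hb => (hg.mono (uIcc_subset_Icc ha hb)).intervalIntegrable
  obtain ⟨x₀, hx₀, hmax⟩ := isCompact_Icc.exists_isMaxOn
    (⟨0, by norm_num⟩ : (Icc (0:ℝ) 1).Nonempty) hf.abs
  rw [isMaxOn_iff] at hmax
  set M := |f x₀| with hMdef
  have hM0 : 0 ≤ M := abs_nonneg _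
  have hftc : ∀ y ∈ Icc (0:ℝ) 1, ∀ x ∈ Icc (0:ℝ) 1, y ≤ x →
      (∫ t in y..x, 2 * f t * f' t) = f x ^ 2 - f y ^ 2 := by
    intro y hy x hx hyx
    have hsub : Icc y x ⊆ Icc 0 1 := Icc_subset_Icc hy.1 hx.2
    refine intervalIntegral.integral_eq_sub_of_hasDeriv_right_of_le hyx
      ((hf.mono hsub).pow 2) (fun t ht => ?_) ?_
    · have h01 : t ∈ Ioo (0:ℝ) 1 := ⟨lt_of_le_of_lt hy.1 ht.1, lt_of_lt_of_le ht.2 hx.2⟩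
      have hd : HasDerivAt f (f' t) t :=
        (hderiv t (Ioo_subset_Icc_self h01)).hasDerivAt (Icc_mem_nhds h01.1 h01.2)
      have := (hd.pow 2).hasDerivWithinAt (s := Ioi t)
      simpa [mul_comm, mul_assoc, mul_left_comm] using this
    · exact hii _ (((continuousOn_const.mul hf).mul hcont')) y x hy hx
  set A := ∫ x in (0:ℝ)..1, f x ^ 2 with hAdef
  set B := ∫ x in (0:ℝ)..1, |f x| with hBdef
  set Q := ∫ x in (0:ℝ)..1, f' x ^ 2 with hQdef
  set K := ∫ x in (0:ℝ)..1, 2 * |f x * f' x| with hKdef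
  have hKcont : ContinuousOn (fun x => 2 * |f x * f' x|) (Icc (0:ℝ) 1) :=
    continuousOn_const.mul (hf.mul hcont').abs
  have hKint : IntervalIntegrable (fun x => 2 * |f x * f' x|) volume 0 1 :=
    hii _ hKcont 0 1 (by norm_num) (by norm_num)
  have h01 : (0:ℝ) ∈ Icc (0:ℝ) 1 := by norm_num
  have h11 : (1:ℝ) ∈ Icc (0:ℝ) 1 := by norm_num
  have hA0 : 0 ≤ A := intervalIntegral.integral_nonneg (by norm_num) (fun x _ => sq_nonneg _)
  have hB0 : 0 ≤ B := intervalIntegral.integral_nonneg (by norm_num) (fun x _ => abs_nonneg _)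
  have hQ0 : 0 ≤ Q := intervalIntegral.integral_nonneg (by norm_num) (fun x _ => sq_nonneg _)
  -- M^2 - f y ^ 2 ≤ K for all y ∈ [0,1]
  have hM2 : ∀ y ∈ Icc (0:ℝ) 1, M ^ 2 - f y ^ 2 ≤ K := by
    intro y hy
    have habs : ∀ a b : ℝ, a ∈ Icc (0:ℝ) 1 → b ∈ Icc (0:ℝ) 1 → a ≤ b →
        (∫ t in a..b, 2 * |f t * f' t|) ≤ K := by
      intro a b ha hb hab
      exact intervalIntegral.integral_mono_interval ha.1 hab hb.2
        (Filter.Eventually.of_forall (fun t => by positivity)) hKint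
    have hMsq : M ^ 2 = f x₀ ^ 2 := sq_abs _
    rcases le_total y x₀ with hc | hc
    · have h1 : (∫ t in y..x₀, 2 * f t * f' t) ≤ ∫ t in y..x₀, 2 * |f t * f' t| := by
        refine intervalIntegral.integral_mono_on hc
          (hii _ ((continuousOn_const.mul hf).mul hcont') y x₀ hy hx₀)
          (hii _ hKcont y x₀ hy hx₀) (fun t _ => ?_)
        rw [mul_assoc]
        have := le_abs_self (f t * f' t)
        linarith
      rw [hftc y hy x₀ hx₀ hc] at h1
      have := habs y x₀ hy hx₀ hc
      linarith [hMsq ▸ h1]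
    · have h1 : (∫ t in x₀..y, -(2 * f t * f' t)) ≤ ∫ t in x₀..y, 2 * |f t * f' t| := by
        refine intervalIntegral.integral_mono_on hc
          ((hii _ ((continuousOn_const.mul hf).mul hcont') x₀ y hx₀ hy).neg)
          (hii _ hKcont x₀ y hx₀ hy) (fun t _ => ?_)
        have := neg_abs_le (f t * f' t)
        rw [mul_assoc]
        linarith [abs_nonneg (f t * f' t)]
      rw [intervalIntegral.integral_neg, hftc x₀ hx₀ y hy hc] at h1
      have := habs x₀ y hx₀ hy hc
      have hMsq' : M ^ 2 - f y ^ 2 = -(f y ^ 2 - f x₀ ^ 2) := by rw [hMsq]; ring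
      linarith
  -- integrate over y : M^2 ≤ A + K
  have hMAK : M ^ 2 ≤ A + K := by
    have hmono : (∫ y in (0:ℝ)..1, (M ^ 2 - f y ^ 2)) ≤ ∫ y in (0:ℝ)..1, K := by
      refine intervalIntegral.integral_mono_on (by norm_num)
        ((intervalIntegrable_const).sub (hii _ (hf.pow 2) 0 1 h01 h11))
        intervalIntegrable_const hM2
    rw [intervalIntegral.integral_sub intervalIntegrable_const (hii (fun x => f x ^ 2) (hf.pow 2) 0 1 h01 h11)]
      at hmono
    simp [intervalIntegral.integral_const] at hmono
    linarith
  -- K ≤ ε A + Q / ε for every ε > 0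
  have hKe : ∀ ε > (0:ℝ), K ≤ ε * A + Q / ε := by
    intro ε hε
    have hpt : ∀ x ∈ Icc (0:ℝ) 1, 2 * |f x * f' x| ≤ ε * f x ^ 2 + f' x ^ 2 / ε := by
      intro x _
      have heq : ε * f x ^ 2 + f' x ^ 2 / ε = (ε ^ 2 * f x ^ 2 + f' x ^ 2) / ε := by
        field_simp
      rw [heq, le_div_iff₀ hε, abs_mul]
      nlinarith [sq_nonneg (ε * |f x| - |f' x|), sq_abs (f x), sq_abs (f' x),
        abs_nonneg (f x), abs_nonneg (f' x)]
    have hint2 : IntervalIntegrable (fun x => ε * f x ^ 2 + f' x ^ 2 / ε) volume 0 1 :=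
      hii _ ((continuousOn_const.mul (hf.pow 2)).add ((hcont'.pow 2).div_const ε)) 0 1 h01 h11
    have hmono := intervalIntegral.integral_mono_on (by norm_num : (0:ℝ) ≤ 1) hKint hint2 hpt
    have hsplit : (∫ x in (0:ℝ)..1, (ε * f x ^ 2 + f' x ^ 2 / ε)) = ε * A + Q / ε := by
      rw [intervalIntegral.integral_add (hii (fun x => ε * f x ^ 2) (continuousOn_const.mul (hf.pow 2)) 0 1 h01 h11)
        (hii (fun x => f' x ^ 2 / ε) ((hcont'.pow 2).div_const ε) 0 1 h01 h11),
        intervalIntegral.integral_const_mul, intervalIntegral.integral_div]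
    rw [hsplit] at hmono
    exact hmono
  -- A ≤ M * B
  have hAB : A ≤ M * B := by
    have hmono : A ≤ ∫ x in (0:ℝ)..1, M * |f x| := by
      refine intervalIntegral.integral_mono_on (by norm_num)
        (hii _ (hf.pow 2) 0 1 h01 h11)
        (hii _ (continuousOn_const.mul hf.abs) 0 1 h01 h11) (fun x hx => ?_)
      have h1 : |f x| ≤ M := hmax x hx
      calc f x ^ 2 = |f x| * |f x| := by rw [← sq_abs]; ring
        _ ≤ M * |f x| := mul_le_mul_of_nonneg_right h1 (abs_nonneg _)
    rwa [intervalIntegral.integral_const_mul] at hmono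
  -- ∫ f^4 ≤ M^3 * B
  have h4 : (∫ x in (0:ℝ)..1, f x ^ 4) ≤ M ^ 3 * B := by
    have hmono : (∫ x in (0:ℝ)..1, f x ^ 4) ≤ ∫ x in (0:ℝ)..1, M ^ 3 * |f x| := by
      refine intervalIntegral.integral_mono_on (by norm_num)
        (hii _ (hf.pow 4) 0 1 h01 h11)
        (hii _ (continuousOn_const.mul hf.abs) 0 1 h01 h11) (fun x hx => ?_)
      have h1 : |f x| ≤ M := hmax x hx
      have h2 : |f x| ^ 3 ≤ M ^ 3 := pow_le_pow_left₀ (abs_nonneg _) h1 3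
      have h3 : f x ^ 4 = |f x| ^ 3 * |f x| := by
        have he : |f x| ^ 3 * |f x| = |f x ^ 4| := by rw [← pow_succ, abs_pow]
        rw [he, abs_of_nonneg (by positivity : (0:ℝ) ≤ f x ^ 4)]
      rw [h3]
      exact mul_le_mul_of_nonneg_right h2 (abs_nonneg _)
    rwa [intervalIntegral.integral_const_mul] at hmono
  -- combine
  have hK' : ∀ ε > (0:ℝ), M ^ 2 ≤ A + (ε * A + Q / ε) :=
    fun ε hε => hMAK.trans (add_le_add_right (hKe ε hε) A)
  have h16 : (∫ x in (0:ℝ)..1, f x ^ 4) ≤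
      16 * (Real.sqrt A + Real.sqrt Q) ^ 2 * B ^ 2 :=
    h4.trans (alg_core A B Q M hA0 hB0 hQ0 hM0 hAB hK')
  have h4nonneg : 0 ≤ ∫ x in (0:ℝ)..1, f x ^ 4 :=
    intervalIntegral.integral_nonneg (by norm_num) (fun x _ => by positivity)
  set H := Real.sqrt A + Real.sqrt Q with hHdef
  have hH0 : 0 ≤ H := by positivity
  have hstep : (∫ x in (0:ℝ)..1, f x ^ 4) ^ ((1:ℝ)/4) ≤
      (16 * H ^ 2 * B ^ 2) ^ ((1:ℝ)/4) :=
    Real.rpow_le_rpow h4nonneg h16 (by norm_num)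
  refine hstep.trans_eq ?_
  have hR0 : (0:ℝ) ≤ 2 * H ^ ((1:ℝ)/2) * B ^ ((1:ℝ)/2) := by positivity
  have hR4 : (2 * H ^ ((1:ℝ)/2) * B ^ ((1:ℝ)/2)) ^ (4:ℕ) = 16 * H ^ 2 * B ^ 2 := by
    have hH4 : (H ^ ((1:ℝ)/2)) ^ (4:ℕ) = H ^ 2 := by
      rw [← Real.rpow_natCast (H ^ ((1:ℝ)/2)) 4, ← Real.rpow_mul hH0]
      norm_num
    have hB4 : (B ^ ((1:ℝ)/2)) ^ (4:ℕ) = B ^ 2 := by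
      rw [← Real.rpow_natCast (B ^ ((1:ℝ)/2)) 4, ← Real.rpow_mul hB0]
      norm_num
    calc (2 * H ^ ((1:ℝ)/2) * B ^ ((1:ℝ)/2)) ^ (4:ℕ)
        = 16 * (H ^ ((1:ℝ)/2)) ^ (4:ℕ) * (B ^ ((1:ℝ)/2)) ^ (4:ℕ) := by ring
      _ = 16 * H ^ 2 * B ^ 2 := by rw [hH4, hB4]
  rw [← hR4, ← Real.rpow_natCast (2 * H ^ ((1:ℝ)/2) * B ^ ((1:ℝ)/2)) 4, ← Real.rpow_mul hR0]
  norm_num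
end

section
/- Let Δ > 0, K₁ > 0, x₀ ∈ ℝ, and define a : ℝ → ℝ by a(x) = (2/Δ) · ln(cosh(Δ √(K₁/2) (x + x₀))). Then a is twice differentiable and satisfies a''(x) = Δ K₁ e^{−Δ a(x)} for every x ∈ ℝ, and the first integral (1/2)(a'(x))² + K₁ e^{−Δ a(x)} = K₁ holds for every x ∈ ℝ. -/
/-- The steady-state profile `a(x) = (2/Δ)ln(cosh(Δ√(K₁/2)(x+x₀)))` is twice differentiable,
satisfies `a'' = ΔK₁e^{−Δa}` and the first integral `(1/2)(a')² + K₁e^{−Δa} = K₁`. -/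
theorem steady_profile_a (Δ K₁ x₀ : ℝ) (hΔ : 0 < Δ) (hK₁ : 0 < K₁)
    (a : ℝ → ℝ)
    (ha : a = fun x => (2 / Δ) * Real.log (Real.cosh (Δ * Real.sqrt (K₁ / 2) * (x + x₀)))) :
    (∀ x, DifferentiableAt ℝ a x) ∧ (∀ x, DifferentiableAt ℝ (deriv a) x) ∧
    (∀ x, deriv (deriv a) x = Δ * K₁ * Real.exp (-Δ * a x)) ∧
    (∀ x, (1 / 2) * (deriv a x) ^ 2 + K₁ * Real.exp (-Δ * a x) = K₁) := by
  set s := Real.sqrt (K₁ / 2) with hs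
  have hs2 : s ^ 2 = K₁ / 2 := Real.sq_sqrt (by linarith)
  set c := Δ * s with hc
  set u : ℝ → ℝ := fun x => c * (x + x₀) with hu
  have hΔ' : Δ ≠ 0 := ne_of_gt hΔ
  have hch : ∀ x, (0:ℝ) < Real.cosh (u x) := fun x => Real.cosh_pos _
  -- derivative of u
  have hu' : ∀ x, HasDerivAt u c x := by
    intro x
    simpa using (((hasDerivAt_id x).add_const x₀).const_mul c)
  -- derivative of a
  have hda : ∀ x, HasDerivAt a (2 * s * (Real.sinh (u x) / Real.cosh (u x))) x := by
    intro x
    have h1 : HasDerivAt (fun x => Real.cosh (u x)) (Real.sinh (u x) * c) x :=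
      (Real.hasDerivAt_cosh (u x)).comp x (hu' x)
    have h2 : HasDerivAt (fun x => Real.log (Real.cosh (u x)))
        (Real.sinh (u x) * c / Real.cosh (u x)) x := h1.log (ne_of_gt (hch x))
    have h3 := h2.const_mul (2 / Δ)
    rw [ha]
    refine h3.congr_deriv ?_
    field_simp [hc]
    ring
  have hderiv : deriv a = fun x => 2 * s * (Real.sinh (u x) / Real.cosh (u x)) := by
    funext x; exact (hda x).deriv
  -- derivative of deriv a
  have hdd : ∀ x, HasDerivAt (deriv a) (Δ * K₁ / Real.cosh (u x) ^ 2) x := by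
    intro x
    have hsh : HasDerivAt (fun x => Real.sinh (u x)) (Real.cosh (u x) * c) x :=
      (Real.hasDerivAt_sinh (u x)).comp x (hu' x)
    have hchd : HasDerivAt (fun x => Real.cosh (u x)) (Real.sinh (u x) * c) x :=
      (Real.hasDerivAt_cosh (u x)).comp x (hu' x)
    have hdiv := (hsh.div hchd (ne_of_gt (hch x))).const_mul (2 * s)
    rw [hderiv]
    refine hdiv.congr_deriv ?_
    have hid : Real.cosh (u x) ^ 2 - Real.sinh (u x) ^ 2 = 1 :=
      Real.cosh_sq_sub_sinh_sq (u x)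
    field_simp [hc]
    linear_combination 2*Δ*s^2*hid + 2*Δ*hs2
  -- exp(-Δ a x) = 1 / cosh(u x)^2
  have hexp : ∀ x, Real.exp (-Δ * a x) = 1 / Real.cosh (u x) ^ 2 := by
    intro x
    have : -Δ * a x = -(2 * Real.log (Real.cosh (u x))) := by
      rw [ha]; field_simp; simp only [hu]
    rw [this, Real.exp_neg, two_mul, Real.exp_add, Real.exp_log (hch x)]
    rw [one_div]; congr 1; ring
  refine ⟨fun x => (hda x).differentiableAt, fun x => (hdd x).differentiableAt, ?_, ?_⟩
  · intro x
    rw [(hdd x).deriv, hexp x]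
    field_simp
  · intro x
    rw [hderiv, hexp x]
    have hid : Real.cosh (u x) ^ 2 - Real.sinh (u x) ^ 2 = 1 :=
      Real.cosh_sq_sub_sinh_sq (u x)
    have hch2 : Real.cosh (u x) ^ 2 ≠ 0 := by positivity
    field_simp
    linear_combination 2*Real.sinh (u x)^2*hs2 - K₁*hid
end
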